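/- Let Φ be a finite colour set, 𝒫 ⊆ Φ³ a palette that is (d, ·∙)-dense, and let (V,<) be a linearly ordered finite vertex set with colouring φ : V^(2) → Φ chosen uniformly at random. Then for every η > 0, the probability that the hypergraph H^𝒫_φ fails to be (d, η, ·∙)-dense tends to 0 as |V| → ∞. -/

import Mathlib

open scoped Classical
open Finset

/-- The hypergraph `H^Pal_φ` on `Fin n` is `(d, η, ·∙)`-dense: for all `A ⊆ V` and
`P ⊆ V²` there are at least `d|A||P| − η n³` triples `(a,b,c)` with `a ∈ A`,
`(b,c) ∈ P` and `{a,b,c}` an edge, where `{a,b,c}` is an edge iff its increasing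
enumeration `x < y < z` has colour pattern `(φ(x,y), φ(x,z), φ(y,z)) ∈ Pal`. -/
def PaletteEvDense {Φ : Type*} (Pal : Set (Φ × Φ × Φ)) (n : ℕ)
    (φ : Sym2 (Fin n) → Φ) (d η : ℝ) : Prop :=
  ∀ (A : Finset (Fin n)) (P : Finset (Fin n × Fin n)),
    d * A.card * P.card - η * (n : ℝ) ^ 3 ≤
      (({t : Fin n × Fin n × Fin n | t.1 ∈ A ∧ (t.2.1, t.2.2) ∈ P ∧
          ∃ x y z : Fin n, x < y ∧ y < z ∧
            ({t.1, t.2.1, t.2.2} : Finset (Fin n)) = {x, y, z} ∧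
            (φ s(x, y), φ s(x, z), φ s(y, z)) ∈ Pal}).ncard : ℝ)

set_option linter.unusedSectionVars false
set_option linter.unusedVariables false

section PaletteAux

-- generic update-sum machinery
section upd
variable {ι Ψ : Type*} [Fintype ι] [DecidableEq ι] [Fintype Ψ] [Nonempty Ψ]

def updEquiv (e : ι) : ((ι → Ψ) × Ψ) ≃ ((ι → Ψ) × Ψ) where
  toFun p := (Function.update p.1 e p.2, p.1 e)
  invFun p := (Function.update p.1 e p.2, p.1 e)
  left_inv p := by simp [Function.update_idem, Function.update_eq_self]
  right_inv p := by simp [Function.update_idem, Function.update_eq_self]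

lemma sum_update_single (e : ι) (f : (ι → Ψ) → ℝ) :
    ∑ φ : ι → Ψ, ∑ α : Ψ, f (Function.update φ e α)
      = (Fintype.card Ψ : ℝ) * ∑ φ : ι → Ψ, f φ := by
  calc ∑ φ : ι → Ψ, ∑ α : Ψ, f (Function.update φ e α)
      = ∑ p : (ι → Ψ) × Ψ, f (Function.update p.1 e p.2) :=
        (Fintype.sum_prod_type
          (f := fun p : (ι → Ψ) × Ψ => f (Function.update p.1 e p.2))).symm
  _ = ∑ p : (ι → Ψ) × Ψ, f p.1 :=
        Fintype.sum_equiv (updEquiv e) _ _ (fun p => rfl)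
  _ = ∑ φ : ι → Ψ, ∑ _α : Ψ, f φ :=
        Fintype.sum_prod_type (f := fun p : (ι → Ψ) × Ψ => f p.1)
  _ = (Fintype.card Ψ : ℝ) * ∑ φ : ι → Ψ, f φ := by
        simp [Finset.sum_const, mul_comm, Finset.mul_sum]

lemma sum_update_double (e1 e2 : ι) (f : (ι → Ψ) → ℝ) :
    ∑ φ : ι → Ψ, ∑ α : Ψ, ∑ β : Ψ,
        f (Function.update (Function.update φ e1 α) e2 β)
      = ((Fintype.card Ψ : ℝ)) ^ 2 * ∑ φ : ι → Ψ, f φ := by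
  have h1 := sum_update_single e1 (fun ψ => ∑ β : Ψ, f (Function.update ψ e2 β))
  rw [h1, sum_update_single e2 f]
  ring

lemma sum_eq_zero_of_local (e1 e2 : ι) (f g : (ι → Ψ) → ℝ)
    (hg : ∀ (φ : ι → Ψ) (α β : Ψ),
      g (Function.update (Function.update φ e1 α) e2 β) = g φ)
    (h0 : ∀ φ : ι → Ψ, ∑ α : Ψ, ∑ β : Ψ,
      f (Function.update (Function.update φ e1 α) e2 β) = 0) :
    ∑ φ : ι → Ψ, f φ * g φ = 0 := by
  have key := sum_update_double e1 e2 (fun φ => f φ * g φ)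
  have lhs0 : ∑ φ : ι → Ψ, ∑ α : Ψ, ∑ β : Ψ,
      (fun φ => f φ * g φ) (Function.update (Function.update φ e1 α) e2 β) = 0 := by
    apply Finset.sum_eq_zero
    intro φ _
    simp only [hg]
    have hs : ∑ α : Ψ, ∑ β : Ψ,
        f (Function.update (Function.update φ e1 α) e2 β) * g φ
        = (∑ α : Ψ, ∑ β : Ψ,
            f (Function.update (Function.update φ e1 α) e2 β)) * g φ := by
      rw [Finset.sum_mul]
      exact Finset.sum_congr rfl fun α _ => (Finset.sum_mul _ _ _).symm
    rw [hs, h0 φ, zero_mul]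
  have hcard : ((Fintype.card Ψ : ℝ)) ^ 2 ≠ 0 := by
    have := Fintype.card_pos (α := Ψ)
    positivity
  have : ((Fintype.card Ψ : ℝ)) ^ 2 * ∑ φ : ι → Ψ, f φ * g φ = 0 := by
    rw [← key]; exact lhs0
  exact (mul_eq_zero.mp this).resolve_left hcard

end upd

variable {Φ : Type} [Fintype Φ] [Nonempty Φ] {n : ℕ}

def Edge (Pal : Set (Φ × Φ × Φ)) (φ : Sym2 (Fin n) → Φ) (a b c : Fin n) : Prop :=
  ∃ x y z : Fin n, x < y ∧ y < z ∧
    ({a, b, c} : Finset (Fin n)) = {x, y, z} ∧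
    (φ s(x, y), φ s(x, z), φ s(y, z)) ∈ Pal

lemma le_of_mem_triple {α : Type*} [LinearOrder α] [DecidableEq α] {x y z w : α}
    (h1 : x < y) (h2 : y < z)
    (hw : w ∈ ({x, y, z} : Finset α)) : x ≤ w ∧ w ≤ z := by
  simp only [mem_insert, mem_singleton] at hw
  rcases hw with rfl | rfl | rfl
  · exact ⟨le_refl _, (h1.trans h2).le⟩
  · exact ⟨h1.le, h2.le⟩
  · exact ⟨(h1.trans h2).le, le_refl _⟩

lemma triple_eq {α : Type*} [LinearOrder α] [DecidableEq α] {x y z x' y' z' : α}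
    (h1 : x < y) (h2 : y < z) (h1' : x' < y') (h2' : y' < z')
    (hs : ({x, y, z} : Finset α) = ({x', y', z'} : Finset α)) :
    x = x' ∧ y = y' ∧ z = z' := by
  have hx : x ∈ ({x', y', z'} : Finset α) := hs ▸ (by simp)
  have hz : z ∈ ({x', y', z'} : Finset α) := hs ▸ (by simp)
  have hx' : x' ∈ ({x, y, z} : Finset α) := hs.symm ▸ (by simp)
  have hz' : z' ∈ ({x, y, z} : Finset α) := hs.symm ▸ (by simp)
  have hy : y ∈ ({x', y', z'} : Finset α) := hs ▸ (by simp)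
  have exx : x = x' :=
    le_antisymm (le_of_mem_triple h1 h2 hx').1 (le_of_mem_triple h1' h2' hx).1
  have ezz : z = z' :=
    le_antisymm (le_of_mem_triple h1' h2' hz).2 (le_of_mem_triple h1 h2 hz').2
  refine ⟨exx, ?_, ezz⟩
  simp only [mem_insert, mem_singleton] at hy
  rcases hy with h | h | h
  · exact absurd (exx ▸ h ▸ h1) (lt_irrefl _)
  · exact h
  · exact absurd (ezz ▸ h ▸ h2) (lt_irrefl _)

lemma edge_distinct {Pal : Set (Φ × Φ × Φ)} {φ : Sym2 (Fin n) → Φ} {a b c : Fin n}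
    (h : Edge Pal φ a b c) : a ≠ b ∧ a ≠ c ∧ b ≠ c := by
  obtain ⟨x, y, z, hxy, hyz, hset, -⟩ := h
  have hny : x ∉ ({y, z} : Finset (Fin n)) := by simp [hxy.ne, (hxy.trans hyz).ne]
  have hnz : y ∉ ({z} : Finset (Fin n)) := by simp [hyz.ne]
  have hcard : ({a, b, c} : Finset (Fin n)).card = 3 := by
    rw [hset, card_insert_of_notMem hny, card_insert_of_notMem hnz, card_singleton]
  have two : ∀ u v : Fin n, (({u, v} : Finset (Fin n))).card ≤ 2 := fun u v =>
    (card_insert_le _ _).trans (by simp)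
  refine ⟨?_, ?_, ?_⟩ <;> rintro rfl
  · have hsub : ({a, a, c} : Finset (Fin n)) ⊆ {a, c} := by
      intro w hw; simp only [mem_insert, mem_singleton] at hw ⊢; tauto
    have := (card_le_card hsub).trans (two a c); omega
  · have hsub : ({a, b, a} : Finset (Fin n)) ⊆ {a, b} := by
      intro w hw; simp only [mem_insert, mem_singleton] at hw ⊢; tauto
    have := (card_le_card hsub).trans (two a b); omega
  · have hsub : ({a, b, b} : Finset (Fin n)) ⊆ {a, b} := by
      intro w hw; simp only [mem_insert, mem_singleton] at hw ⊢; tauto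
    have := (card_le_card hsub).trans (two a b); omega

lemma pair_mem_cases {a b c u v : Fin n} (hu : u ∈ ({a, b, c} : Finset (Fin n)))
    (hv : v ∈ ({a, b, c} : Finset (Fin n))) (huv : u ≠ v) :
    s(u, v) = s(a, b) ∨ s(u, v) = s(a, c) ∨ s(u, v) = s(b, c) := by
  simp only [mem_insert, mem_singleton] at hu hv
  rcases hu with rfl | rfl | rfl <;> rcases hv with rfl | rfl | rfl <;>
    simp_all [Sym2.eq_iff]

lemma edge_congr_aux {Pal : Set (Φ × Φ × Φ)} {φ ψ : Sym2 (Fin n) → Φ} {a b c : Fin n}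
    (hab : φ s(a, b) = ψ s(a, b)) (hac : φ s(a, c) = ψ s(a, c))
    (hbc : φ s(b, c) = ψ s(b, c)) (h : Edge Pal φ a b c) : Edge Pal ψ a b c := by
  obtain ⟨x, y, z, hxy, hyz, hset, hpat⟩ := h
  have agree : ∀ u v : Fin n, u ∈ ({a, b, c} : Finset (Fin n)) →
      v ∈ ({a, b, c} : Finset (Fin n)) → u ≠ v → φ s(u, v) = ψ s(u, v) := by
    intro u v hu hv huv
    rcases pair_mem_cases hu hv huv with h | h | h <;> rw [h] <;> assumption
  have hx : x ∈ ({a, b, c} : Finset (Fin n)) := hset ▸ (by simp)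
  have hy : y ∈ ({a, b, c} : Finset (Fin n)) := hset ▸ (by simp)
  have hz : z ∈ ({a, b, c} : Finset (Fin n)) := hset ▸ (by simp)
  refine ⟨x, y, z, hxy, hyz, hset, ?_⟩
  rw [← agree x y hx hy hxy.ne, ← agree x z hx hz (hxy.trans hyz).ne,
    ← agree y z hy hz hyz.ne]
  exact hpat

lemma edge_congr {Pal : Set (Φ × Φ × Φ)} {φ ψ : Sym2 (Fin n) → Φ} {a b c : Fin n}
    (hab : φ s(a, b) = ψ s(a, b)) (hac : φ s(a, c) = ψ s(a, c))
    (hbc : φ s(b, c) = ψ s(b, c)) : Edge Pal φ a b c ↔ Edge Pal ψ a b c :=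
  ⟨edge_congr_aux hab hac hbc, edge_congr_aux hab.symm hac.symm hbc.symm⟩

lemma edge_iff_of_sorted {Pal : Set (Φ × Φ × Φ)} {φ : Sym2 (Fin n) → Φ} {a b c x y z : Fin n}
    (hxy : x < y) (hyz : y < z) (hset : ({a, b, c} : Finset (Fin n)) = {x, y, z}) :
    Edge Pal φ a b c ↔ (φ s(x, y), φ s(x, z), φ s(y, z)) ∈ Pal := by
  constructor
  · rintro ⟨x', y', z', hxy', hyz', hset', hpat⟩
    obtain ⟨rfl, rfl, rfl⟩ := triple_eq hxy' hyz' hxy hyz (hset'.symm.trans hset)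
    exact hpat
  · intro h
    exact ⟨x, y, z, hxy, hyz, hset, h⟩

/-- colouring with prescribed values on the three pairs of `a,b,c`. -/
def loc (a b c : Fin n) (α β γ : Φ) : Sym2 (Fin n) → Φ :=
  fun e => if e = s(a, b) then α else if e = s(a, c) then β else γ

lemma loc_ab {a b c : Fin n} (α β γ : Φ) : loc a b c α β γ s(a, b) = α := by
  simp [loc]

lemma loc_ac {a b c : Fin n} (hbc : b ≠ c) (α β γ : Φ) : loc a b c α β γ s(a, c) = β := by
  have h : s(a, c) ≠ s(a, b) := fun h => by
    rcases Sym2.eq_iff.mp h with ⟨-, h2⟩ | ⟨h1, h2⟩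
    · exact hbc h2.symm
    · exact hbc (h1.symm.trans h2.symm)
  simp [loc, h]

lemma loc_bc {a b c : Fin n} (hab : a ≠ b) (hac : a ≠ c) (α β γ : Φ) :
    loc a b c α β γ s(b, c) = γ := by
  have h1 : s(b, c) ≠ s(a, b) := fun h => by
    rcases Sym2.eq_iff.mp h with ⟨h1, -⟩ | ⟨-, h2⟩
    · exact hab h1.symm
    · exact hac h2.symm
  have h2 : s(b, c) ≠ s(a, c) := fun h => by
    rcases Sym2.eq_iff.mp h with ⟨h1, -⟩ | ⟨-, h2⟩
    · exact hab h1.symm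
    · exact hac h2.symm
  simp [loc, h1, h2]

/-- number of pairs (α, β) completing base colour γ to an edge pattern. -/
noncomputable def qcard (Pal : Set (Φ × Φ × Φ)) (a b c : Fin n) (γ : Φ) : ℕ :=
  (univ.filter (fun p : Φ × Φ => Edge Pal (loc a b c p.1 p.2 γ) a b c)).card

noncomputable def qd (Pal : Set (Φ × Φ × Φ)) (a b c : Fin n) (γ : Φ) : ℝ :=
  (qcard Pal a b c γ : ℝ) / ((Fintype.card Φ : ℝ)) ^ 2

lemma ncard_eq_filter_card (S : Set (Φ × Φ)) :
    (S.ncard : ℝ) = ((univ.filter (fun p : Φ × Φ => p ∈ S)).card : ℝ) := by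
  rw [Set.ncard_eq_toFinset_card']
  congr 1
  congr 1
  ext p
  simp

lemma swap_filter_card (C : Φ → Φ → Prop) :
    (univ.filter (fun p : Φ × Φ => C p.2 p.1)).card
      = (univ.filter (fun p : Φ × Φ => C p.1 p.2)).card := by
  apply Finset.card_nbij (fun p => p.swap)
  · intro p hp; simp_all
  · intro p _ q _ h; simpa [Prod.ext_iff, and_comm] using h
  · intro p hp; exact ⟨p.swap, by simp_all, by simp⟩

lemma d_le_qcard (Pal : Set (Φ × Φ × Φ)) (d : ℝ)
    (h1 : ∀ α : Φ, d * ((Fintype.card Φ : ℝ)) ^ 2 ≤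
      (({bc : Φ × Φ | (α, bc.1, bc.2) ∈ Pal}).ncard : ℝ))
    (h2 : ∀ β : Φ, d * ((Fintype.card Φ : ℝ)) ^ 2 ≤
      (({ac : Φ × Φ | (ac.1, β, ac.2) ∈ Pal}).ncard : ℝ))
    (h3 : ∀ γ : Φ, d * ((Fintype.card Φ : ℝ)) ^ 2 ≤
      (({ab : Φ × Φ | (ab.1, ab.2, γ) ∈ Pal}).ncard : ℝ))
    {a b c : Fin n} (hab : a ≠ b) (hac : a ≠ c) (hbc : b ≠ c) (γ : Φ) :
    d * ((Fintype.card Φ : ℝ)) ^ 2 ≤ (qcard Pal a b c γ : ℝ) := by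
  have key : ∀ (x y z : Fin n), x < y → y < z →
      ({a, b, c} : Finset (Fin n)) = {x, y, z} →
      ∀ C : Φ × Φ → Prop,
      (∀ p : Φ × Φ, C p → (loc a b c p.1 p.2 γ s(x, y), loc a b c p.1 p.2 γ s(x, z),
          loc a b c p.1 p.2 γ s(y, z)) ∈ Pal) →
      ((univ.filter C).card : ℝ) ≤ (qcard Pal a b c γ : ℝ) := by
    intro x y z hxy hyz hset C hC
    norm_cast
    apply Finset.card_le_card
    intro p hp
    simp only [mem_filter, mem_univ, true_and] at hp ⊢
    rw [edge_iff_of_sorted hxy hyz hset]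
    exact hC p hp
  rcases hab.lt_or_gt with hab' | hab' <;> rcases hac.lt_or_gt with hac' | hac' <;>
    rcases hbc.lt_or_gt with hbc' | hbc'
  · -- a < b, a < c, b < c : sorted a b c
    refine (h3 γ).trans ?_
    rw [ncard_eq_filter_card]
    refine key a b c hab' hbc' rfl _ ?_
    intro p hp
    rw [loc_ab, loc_ac hbc, loc_bc hab hac]
    exact hp
  · -- a < b, a < c, c < b : sorted a c b
    refine (h3 γ).trans ?_
    rw [ncard_eq_filter_card]
    norm_cast
    simp only [Set.mem_setOf_eq]
    rw [← swap_filter_card (fun u v => (u, v, γ) ∈ Pal)]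
    exact_mod_cast key a c b hac' hbc' (by ext w; simp; tauto)
      (fun p : Φ × Φ => (p.2, p.1, γ) ∈ Pal) (fun p hp => by
        rw [loc_ac hbc, loc_ab, show s(c, b) = s(b, c) from Sym2.eq_swap,
          loc_bc hab hac]; exact hp)
  · -- a < b, c < a, b < c : impossible
    exact absurd (hac'.trans (hab'.trans hbc')) (lt_irrefl _)
  · -- a < b, c < a, c < b : sorted c a b
    refine (h2 γ).trans ?_
    rw [ncard_eq_filter_card]
    norm_cast
    simp only [Set.mem_setOf_eq]
    rw [← swap_filter_card (fun u v => (u, γ, v) ∈ Pal)]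
    exact_mod_cast key c a b hac' hab' (by ext w; simp; tauto)
      (fun p : Φ × Φ => (p.2, γ, p.1) ∈ Pal) (fun p hp => by
        rw [show s(c, a) = s(a, c) from Sym2.eq_swap, loc_ac hbc,
          show s(c, b) = s(b, c) from Sym2.eq_swap, loc_bc hab hac, loc_ab]; exact hp)
  · -- b < a, a < c, b < c : sorted b a c
    refine (h2 γ).trans ?_
    rw [ncard_eq_filter_card]
    refine key b a c hab' hac' (by ext w; simp; tauto) _ ?_
    intro p hp
    rw [show s(b, a) = s(a, b) from Sym2.eq_swap, loc_ab, loc_bc hab hac, loc_ac hbc]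
    exact hp
  · -- b < a, a < c, c < b : impossible
    exact absurd (hbc'.trans (hab'.trans hac')) (lt_irrefl _)
  · -- b < a, c < a, b < c : sorted b c a
    refine (h1 γ).trans ?_
    rw [ncard_eq_filter_card]
    refine key b c a hbc' hac' (by ext w; simp; tauto) _ ?_
    intro p hp
    rw [loc_bc hab hac, show s(b, a) = s(a, b) from Sym2.eq_swap, loc_ab,
      show s(c, a) = s(a, c) from Sym2.eq_swap, loc_ac hbc]
    exact hp
  · -- b < a, c < a, c < b : sorted c b a
    refine (h1 γ).trans ?_
    rw [ncard_eq_filter_card]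
    norm_cast
    simp only [Set.mem_setOf_eq]
    rw [← swap_filter_card (fun u v => (γ, u, v) ∈ Pal)]
    exact_mod_cast key c b a hbc' hab' (by ext w; simp; tauto)
      (fun p : Φ × Φ => (γ, p.2, p.1) ∈ Pal) (fun p hp => by
        rw [show s(c, b) = s(b, c) from Sym2.eq_swap, loc_bc hab hac,
          show s(c, a) = s(a, c) from Sym2.eq_swap, loc_ac hbc,
          show s(b, a) = s(a, b) from Sym2.eq_swap, loc_ab]; exact hp)

lemma qcard_le (Pal : Set (Φ × Φ × Φ)) {a b c : Fin n} (γ : Φ) :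
    (qcard Pal a b c γ : ℝ) ≤ ((Fintype.card Φ : ℝ)) ^ 2 := by
  have h : qcard Pal a b c γ ≤ Fintype.card Φ * Fintype.card Φ := by
    simpa [Fintype.card_prod, qcard] using
      (Finset.card_filter_le Finset.univ
        (fun p : Φ × Φ => Edge Pal (loc a b c p.1 p.2 γ) a b c)).trans
        (le_of_eq Finset.card_univ)
  calc (qcard Pal a b c γ : ℝ) ≤ ((Fintype.card Φ * Fintype.card Φ : ℕ) : ℝ) := by
        exact_mod_cast h
  _ = _ := by push_cast; ring

lemma cardΦ_sq_pos : (0 : ℝ) < ((Fintype.card Φ : ℝ)) ^ 2 := by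
  have := Fintype.card_pos (α := Φ)
  positivity

lemma qd_nonneg (Pal : Set (Φ × Φ × Φ)) (a b c : Fin n) (γ : Φ) :
    0 ≤ qd Pal a b c γ := by
  unfold qd
  positivity

lemma qd_le_one (Pal : Set (Φ × Φ × Φ)) (a b c : Fin n) (γ : Φ) :
    qd Pal a b c γ ≤ 1 := by
  rw [qd, div_le_one cardΦ_sq_pos]
  exact qcard_le Pal γ

noncomputable def Gf (Pal : Set (Φ × Φ × Φ)) (φ : Sym2 (Fin n) → Φ) (a b c : Fin n) : ℝ :=
  if a ≠ b ∧ a ≠ c ∧ b ≠ c then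
    (if Edge Pal φ a b c then 1 else 0) - qd Pal a b c (φ s(b, c))
  else 0

lemma Gf_abs_le (Pal : Set (Φ × Φ × Φ)) (φ : Sym2 (Fin n) → Φ) (a b c : Fin n) :
    |Gf Pal φ a b c| ≤ 1 := by
  unfold Gf
  split
  · rw [abs_le]
    constructor
    · have h1 := qd_le_one Pal a b c (φ s(b, c))
      have h2 : (0:ℝ) ≤ if Edge Pal φ a b c then 1 else 0 := by positivity
      linarith
    · have h1 := qd_nonneg Pal a b c (φ s(b, c))
      have h2 : (if Edge Pal φ a b c then (1:ℝ) else 0) ≤ 1 := by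
        split <;> norm_num
      linarith
  · simp

lemma Gf_congr {Pal : Set (Φ × Φ × Φ)} {φ ψ : Sym2 (Fin n) → Φ} {a b c : Fin n}
    (hab : φ s(a, b) = ψ s(a, b)) (hac : φ s(a, c) = ψ s(a, c))
    (hbc : φ s(b, c) = ψ s(b, c)) : Gf Pal φ a b c = Gf Pal ψ a b c := by
  unfold Gf
  split
  · rw [hbc, edge_congr hab hac hbc]
  · rfl

lemma sym2_ne {u v x y : Fin n} (h1 : ¬(u = x ∧ v = y)) (h2 : ¬(u = y ∧ v = x)) :
    s(u, v) ≠ s(x, y) := fun h => by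
  rcases Sym2.eq_iff.mp h with h | h
  exacts [h1 h, h2 h]

/-- The inner sum over the two colours at `s(a,b)`, `s(a,c)` of the recentred
indicator vanishes. -/
lemma sum_pair_Gf (Pal : Set (Φ × Φ × Φ)) (φ : Sym2 (Fin n) → Φ) {a b c : Fin n}
    (hab : a ≠ b) (hac : a ≠ c) (hbc : b ≠ c) :
    ∑ α : Φ, ∑ β : Φ,
      Gf Pal (Function.update (Function.update φ s(a, b) α) s(a, c) β) a b c = 0 := by
  have he12 : s(a, b) ≠ s(a, c) := sym2_ne (fun h => hbc h.2) (fun h => hac h.1)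
  have he31 : s(b, c) ≠ s(a, b) := sym2_ne (fun h => hab h.1.symm) (fun h => hac h.2.symm)
  have he32 : s(b, c) ≠ s(a, c) := sym2_ne (fun h => hab h.1.symm) (fun h => hbc h.1)
  set γ := φ s(b, c) with hγ
  have key : ∀ α β : Φ,
      Gf Pal (Function.update (Function.update φ s(a, b) α) s(a, c) β) a b c
      = (if Edge Pal (loc a b c α β γ) a b c then (1:ℝ) else 0) - qd Pal a b c γ := by
    intro α β
    have h1 : (Function.update (Function.update φ s(a, b) α) s(a, c) β) s(a, b)
        = loc a b c α β γ s(a, b) := by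
      rw [Function.update_of_ne he12, Function.update_self, loc_ab]
    have h2 : (Function.update (Function.update φ s(a, b) α) s(a, c) β) s(a, c)
        = loc a b c α β γ s(a, c) := by
      rw [Function.update_self, loc_ac hbc]
    have h3 : (Function.update (Function.update φ s(a, b) α) s(a, c) β) s(b, c)
        = loc a b c α β γ s(b, c) := by
      rw [Function.update_of_ne he32, Function.update_of_ne he31, loc_bc hab hac]
    rw [Gf, if_pos (show a ≠ b ∧ a ≠ c ∧ b ≠ c from ⟨hab, hac, hbc⟩)]
    rw [h3, loc_bc hab hac]
    have := edge_congr (Pal := Pal) h1 h2 h3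
    simp only [this]
  simp only [key]
  rw [Finset.sum_congr rfl (fun α _ => Finset.sum_sub_distrib _ _), Finset.sum_sub_distrib]
  have hind : ∑ α : Φ, ∑ β : Φ,
      (if Edge Pal (loc a b c α β γ) a b c then (1:ℝ) else 0) = (qcard Pal a b c γ : ℝ) := by
    rw [← Fintype.sum_prod_type
      (f := fun p : Φ × Φ => if Edge Pal (loc a b c p.1 p.2 γ) a b c then (1:ℝ) else 0)]
    rw [Finset.sum_boole]
    rfl
  rw [hind]
  have hq : ∑ α : Φ, ∑ β : Φ, qd Pal a b c γ
      = ((Fintype.card Φ : ℝ)) ^ 2 * qd Pal a b c γ := by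
    simp [Finset.sum_const, card_univ]
    ring
  rw [hq, qd]
  field_simp
  ring

/-- Gf vanishes on degenerate triples. -/
lemma Gf_degenerate {Pal : Set (Φ × Φ × Φ)} {a b c : Fin n}
    (h : ¬(a ≠ b ∧ a ≠ c ∧ b ≠ c)) (φ : Sym2 (Fin n) → Φ) : Gf Pal φ a b c = 0 := by
  rw [Gf, if_neg h]

/-- Crux: expectation of a product of four recentred indicators over two
vertex-disjoint base pairs vanishes. -/
lemma sum_Gf_vanish (Pal : Set (Φ × Φ × Φ)) {a a' b c b' c' : Fin n} (haa' : a ≠ a')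
    (h1 : b' ≠ b) (h2 : b' ≠ c) (h3 : c' ≠ b) (h4 : c' ≠ c) :
    ∑ φ : Sym2 (Fin n) → Φ,
      Gf Pal φ a b c * (Gf Pal φ a' b c * (Gf Pal φ a b' c' * Gf Pal φ a' b' c')) = 0 := by
  by_cases d1 : a ≠ b ∧ a ≠ c ∧ b ≠ c
  swap
  · exact Finset.sum_eq_zero fun φ _ => by rw [Gf_degenerate d1, zero_mul]
  by_cases d2 : a' ≠ b ∧ a' ≠ c ∧ b ≠ c
  swap
  · exact Finset.sum_eq_zero fun φ _ => by rw [Gf_degenerate d2, zero_mul, mul_zero]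
  by_cases d3 : a ≠ b' ∧ a ≠ c' ∧ b' ≠ c'
  swap
  · exact Finset.sum_eq_zero fun φ _ => by
      rw [Gf_degenerate d3, zero_mul, mul_zero, mul_zero]
  by_cases d4 : a' ≠ b' ∧ a' ≠ c' ∧ b' ≠ c'
  swap
  · exact Finset.sum_eq_zero fun φ _ => by
      rw [Gf_degenerate d4, mul_zero, mul_zero, mul_zero]
  obtain ⟨nab, nac, nbc⟩ := d1
  obtain ⟨nab', nac', -⟩ := d2
  obtain ⟨nab2, nac2, nbc2⟩ := d3
  obtain ⟨nab2', nac2', -⟩ := d4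
  -- the nine pair-distinctness facts
  have p1 : s(a', b) ≠ s(a, b) := sym2_ne (fun h => haa' h.1.symm) (fun h => nab h.2.symm)
  have p2 : s(a', b) ≠ s(a, c) := sym2_ne (fun h => haa' h.1.symm) (fun h => nab h.2.symm)
  have p3 : s(a', c) ≠ s(a, b) := sym2_ne (fun h => haa' h.1.symm) (fun h => nac h.2.symm)
  have p4 : s(a', c) ≠ s(a, c) := sym2_ne (fun h => haa' h.1.symm) (fun h => nac h.2.symm)
  have p5 : s(b, c) ≠ s(a, b) := sym2_ne (fun h => nab h.1.symm) (fun h => nac h.2.symm)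
  have p6 : s(b, c) ≠ s(a, c) := sym2_ne (fun h => nab h.1.symm) (fun h => nbc h.1)
  have p7 : s(a, b') ≠ s(a, b) := sym2_ne (fun h => h1 h.2) (fun h => nab h.1)
  have p8 : s(a, b') ≠ s(a, c) := sym2_ne (fun h => h2 h.2) (fun h => nac h.1)
  have p9 : s(a, c') ≠ s(a, b) := sym2_ne (fun h => h3 h.2) (fun h => nab h.1)
  have p10 : s(a, c') ≠ s(a, c) := sym2_ne (fun h => h4 h.2) (fun h => nac h.1)
  have p11 : s(b', c') ≠ s(a, b) := sym2_ne (fun h => nab2 h.1.symm) (fun h => nac2 h.2.symm)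
  have p12 : s(b', c') ≠ s(a, c) := sym2_ne (fun h => nab2 h.1.symm) (fun h => nac2 h.2.symm)
  have p13 : s(a', b') ≠ s(a, b) := sym2_ne (fun h => haa' h.1.symm) (fun h => nab2 h.2.symm)
  have p14 : s(a', b') ≠ s(a, c) := sym2_ne (fun h => haa' h.1.symm) (fun h => nab2 h.2.symm)
  have p15 : s(a', c') ≠ s(a, b) := sym2_ne (fun h => haa' h.1.symm) (fun h => nac2 h.2.symm)
  have p16 : s(a', c') ≠ s(a, c) := sym2_ne (fun h => haa' h.1.symm) (fun h => nac2 h.2.symm)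
  apply sum_eq_zero_of_local s(a, b) s(a, c) (fun φ => Gf Pal φ a b c)
    (fun φ => Gf Pal φ a' b c * (Gf Pal φ a b' c' * Gf Pal φ a' b' c'))
  · intro φ α β
    have upd : ∀ (e : Sym2 (Fin n)), e ≠ s(a, b) → e ≠ s(a, c) →
        (Function.update (Function.update φ s(a, b) α) s(a, c) β) e = φ e := by
      intro e hea heb
      rw [Function.update_of_ne heb, Function.update_of_ne hea]
    rw [Gf_congr (upd _ p1 p2) (upd _ p3 p4) (upd _ p5 p6),
      Gf_congr (upd _ p7 p8) (upd _ p9 p10) (upd _ p11 p12),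
      Gf_congr (upd _ p13 p14) (upd _ p15 p16) (upd _ p11 p12)]
  · intro φ
    exact sum_pair_Gf Pal φ nab nac nbc

noncomputable def Ff (Pal : Set (Φ × Φ × Φ)) (φ : Sym2 (Fin n) → Φ) (a a' : Fin n) : ℝ :=
  ∑ p : Fin n × Fin n, Gf Pal φ a p.1 p.2 * Gf Pal φ a' p.1 p.2

lemma Ff_abs_le (Pal : Set (Φ × Φ × Φ)) (φ : Sym2 (Fin n) → Φ) (a a' : Fin n) :
    |Ff Pal φ a a'| ≤ (n : ℝ) ^ 2 := by
  calc |Ff Pal φ a a'| ≤ ∑ p : Fin n × Fin n, |Gf Pal φ a p.1 p.2 * Gf Pal φ a' p.1 p.2| :=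
        Finset.abs_sum_le_sum_abs _ _
  _ ≤ ∑ _p : Fin n × Fin n, (1 : ℝ) := by
        apply Finset.sum_le_sum
        intro p _
        rw [abs_mul]
        exact mul_le_one₀ (Gf_abs_le _ _ _ _ _) (abs_nonneg _) (Gf_abs_le _ _ _ _ _)
  _ = (n : ℝ) ^ 2 := by simp [Fintype.card_prod]; ring

lemma sum_sq_Ff_le (Pal : Set (Φ × Φ × Φ)) {a a' : Fin n} (haa' : a ≠ a') :
    ∑ φ : Sym2 (Fin n) → Φ, (Ff Pal φ a a') ^ 2
      ≤ 4 * (n : ℝ) ^ 3 * (Fintype.card (Sym2 (Fin n) → Φ) : ℝ) := by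
  have expand : ∀ φ : Sym2 (Fin n) → Φ, (Ff Pal φ a a') ^ 2
      = ∑ r : (Fin n × Fin n) × (Fin n × Fin n),
          Gf Pal φ a r.1.1 r.1.2 * Gf Pal φ a' r.1.1 r.1.2 *
          (Gf Pal φ a r.2.1 r.2.2 * Gf Pal φ a' r.2.1 r.2.2) := by
    intro φ
    rw [sq, Ff, Finset.sum_mul_sum]
    rw [← Fintype.sum_prod_type (f := fun r : (Fin n × Fin n) × (Fin n × Fin n) =>
      Gf Pal φ a r.1.1 r.1.2 * Gf Pal φ a' r.1.1 r.1.2 *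
      (Gf Pal φ a r.2.1 r.2.2 * Gf Pal φ a' r.2.1 r.2.2))]
  rw [Finset.sum_congr rfl (fun φ _ => expand φ), Finset.sum_comm]
  have hbound : ∀ r : (Fin n × Fin n) × (Fin n × Fin n),
      ∑ φ : Sym2 (Fin n) → Φ,
        Gf Pal φ a r.1.1 r.1.2 * Gf Pal φ a' r.1.1 r.1.2 *
        (Gf Pal φ a r.2.1 r.2.2 * Gf Pal φ a' r.2.1 r.2.2)
      ≤ (if r.2.1 = r.1.1 ∨ r.2.1 = r.1.2 ∨ r.2.2 = r.1.1 ∨ r.2.2 = r.1.2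
          then (Fintype.card (Sym2 (Fin n) → Φ) : ℝ) else 0) := by
    intro r
    split
    case isTrue h =>
      calc ∑ φ : Sym2 (Fin n) → Φ, _ ≤ ∑ _φ : Sym2 (Fin n) → Φ, (1:ℝ) := by
            apply Finset.sum_le_sum
            intro φ _
            have h4 : ∀ x y z w : ℝ, |x| ≤ 1 → |y| ≤ 1 → |z| ≤ 1 → |w| ≤ 1 →
                x * y * (z * w) ≤ 1 := by
              intro x y z w hx hy hz hw
              calc x * y * (z * w) ≤ |x * y * (z * w)| := le_abs_self _
              _ = |x| * |y| * (|z| * |w|) := by rw [abs_mul, abs_mul, abs_mul]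
              _ ≤ 1 := by
                  have hxy : |x| * |y| ≤ 1 := mul_le_one₀ hx (abs_nonneg y) hy
                  have hzw : |z| * |w| ≤ 1 := mul_le_one₀ hz (abs_nonneg w) hw
                  exact mul_le_one₀ hxy (by positivity) hzw
            exact h4 _ _ _ _ (Gf_abs_le _ _ _ _ _) (Gf_abs_le _ _ _ _ _)
              (Gf_abs_le _ _ _ _ _) (Gf_abs_le _ _ _ _ _)
      _ = (Fintype.card (Sym2 (Fin n) → Φ) : ℝ) := by simp
    case isFalse h =>
      push_neg at h
      obtain ⟨k1, k2, k3, k4⟩ := h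
      have := sum_Gf_vanish Pal haa' k1 k2 k3 k4 (b := r.1.1) (c := r.1.2)
      calc ∑ φ : Sym2 (Fin n) → Φ,
            Gf Pal φ a r.1.1 r.1.2 * Gf Pal φ a' r.1.1 r.1.2 *
            (Gf Pal φ a r.2.1 r.2.2 * Gf Pal φ a' r.2.1 r.2.2)
          = ∑ φ : Sym2 (Fin n) → Φ,
            Gf Pal φ a r.1.1 r.1.2 * (Gf Pal φ a' r.1.1 r.1.2 *
            (Gf Pal φ a r.2.1 r.2.2 * Gf Pal φ a' r.2.1 r.2.2)) :=
            Finset.sum_congr rfl fun φ _ => by ring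
      _ = 0 := this
      _ ≤ 0 := le_refl _
  calc ∑ r : (Fin n × Fin n) × (Fin n × Fin n), ∑ φ : Sym2 (Fin n) → Φ, _
      ≤ ∑ r : (Fin n × Fin n) × (Fin n × Fin n),
          (if r.2.1 = r.1.1 ∨ r.2.1 = r.1.2 ∨ r.2.2 = r.1.1 ∨ r.2.2 = r.1.2
            then (Fintype.card (Sym2 (Fin n) → Φ) : ℝ) else 0) :=
        Finset.sum_le_sum fun r _ => hbound r
  _ ≤ 4 * (n : ℝ) ^ 3 * (Fintype.card (Sym2 (Fin n) → Φ) : ℝ) := by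
      set K := (Fintype.card (Sym2 (Fin n) → Φ) : ℝ) with hK
      have hK0 : 0 ≤ K := by positivity
      have nn : ∀ (P : Prop), (0:ℝ) ≤ if P then 1 else 0 := fun P => by
        split <;> norm_num
      have point : ∀ r : (Fin n × Fin n) × (Fin n × Fin n),
          (if r.2.1 = r.1.1 ∨ r.2.1 = r.1.2 ∨ r.2.2 = r.1.1 ∨ r.2.2 = r.1.2
            then K else 0)
          ≤ ((if r.2.1 = r.1.1 then (1:ℝ) else 0) + (if r.2.1 = r.1.2 then 1 else 0)
            + (if r.2.2 = r.1.1 then 1 else 0) + (if r.2.2 = r.1.2 then 1 else 0)) * K := by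
        intro r
        have n1 : (0:ℝ) ≤ if r.2.1 = r.1.1 then 1 else 0 := by split <;> norm_num
        have n2 : (0:ℝ) ≤ if r.2.1 = r.1.2 then 1 else 0 := by split <;> norm_num
        have n3 : (0:ℝ) ≤ if r.2.2 = r.1.1 then 1 else 0 := by split <;> norm_num
        have n4 : (0:ℝ) ≤ if r.2.2 = r.1.2 then 1 else 0 := by split <;> norm_num
        split
        case isTrue h =>
          have h1 : (1:ℝ) ≤ (if r.2.1 = r.1.1 then (1:ℝ) else 0)
              + (if r.2.1 = r.1.2 then 1 else 0)
              + (if r.2.2 = r.1.1 then 1 else 0) + (if r.2.2 = r.1.2 then 1 else 0) := by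
            rcases h with h | h | h | h <;> rw [if_pos h] <;> linarith
          nlinarith
        case isFalse h =>
          positivity
      calc ∑ r : (Fin n × Fin n) × (Fin n × Fin n),
            (if r.2.1 = r.1.1 ∨ r.2.1 = r.1.2 ∨ r.2.2 = r.1.1 ∨ r.2.2 = r.1.2
              then K else 0)
          ≤ ∑ r : (Fin n × Fin n) × (Fin n × Fin n),
            ((if r.2.1 = r.1.1 then (1:ℝ) else 0) + (if r.2.1 = r.1.2 then 1 else 0)
              + (if r.2.2 = r.1.1 then 1 else 0) + (if r.2.2 = r.1.2 then 1 else 0)) * K :=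
            Finset.sum_le_sum fun r _ => point r
      _ = ((∑ r : (Fin n × Fin n) × (Fin n × Fin n), (if r.2.1 = r.1.1 then (1:ℝ) else 0))
            + (∑ r : (Fin n × Fin n) × (Fin n × Fin n), (if r.2.1 = r.1.2 then (1:ℝ) else 0))
            + (∑ r : (Fin n × Fin n) × (Fin n × Fin n), (if r.2.2 = r.1.1 then (1:ℝ) else 0))
            + (∑ r : (Fin n × Fin n) × (Fin n × Fin n), (if r.2.2 = r.1.2 then (1:ℝ) else 0)))
            * K := by
          rw [← Finset.sum_add_distrib, ← Finset.sum_add_distrib, ← Finset.sum_add_distrib,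
            Finset.sum_mul]
      _ ≤ 4 * (n : ℝ) ^ 3 * K := by
          have inner1 : ∀ y : Fin n, ∑ q : Fin n × Fin n,
              (if q.1 = y then (1:ℝ) else 0) = (n:ℝ) := by
            intro y
            rw [Fintype.sum_prod_type (f := fun q : Fin n × Fin n =>
              if q.1 = y then (1:ℝ) else 0)]
            simp [Finset.sum_ite_eq', Finset.card_univ, apply_ite Finset.card,
              apply_ite (Nat.cast : ℕ → ℝ)]
          have inner2 : ∀ y : Fin n, ∑ q : Fin n × Fin n,
              (if q.2 = y then (1:ℝ) else 0) = (n:ℝ) := by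
            intro y
            rw [Fintype.sum_prod_type (f := fun q : Fin n × Fin n =>
              if q.2 = y then (1:ℝ) else 0)]
            simp [Finset.sum_ite_eq', Finset.card_univ, apply_ite Finset.card,
              apply_ite (Nat.cast : ℕ → ℝ)]
          have pairconst : ∑ _p : Fin n × Fin n, (n:ℝ) = (n:ℝ)^3 / (n:ℝ) ∨ True := Or.inr trivial
          have c1 : ∑ r : (Fin n × Fin n) × (Fin n × Fin n),
              (if r.2.1 = r.1.1 then (1:ℝ) else 0) = (n:ℝ)^3 := by
            rw [Fintype.sum_prod_type (f := fun r : (Fin n × Fin n) × (Fin n × Fin n) =>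
              if r.2.1 = r.1.1 then (1:ℝ) else 0)]
            rw [Finset.sum_congr rfl (fun p _ => inner1 p.1)]
            simp [Finset.card_univ]
            ring
          have c2 : ∑ r : (Fin n × Fin n) × (Fin n × Fin n),
              (if r.2.1 = r.1.2 then (1:ℝ) else 0) = (n:ℝ)^3 := by
            rw [Fintype.sum_prod_type (f := fun r : (Fin n × Fin n) × (Fin n × Fin n) =>
              if r.2.1 = r.1.2 then (1:ℝ) else 0)]
            rw [Finset.sum_congr rfl (fun p _ => inner1 p.2)]
            simp [Finset.card_univ]
            ring
          have c3 : ∑ r : (Fin n × Fin n) × (Fin n × Fin n),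
              (if r.2.2 = r.1.1 then (1:ℝ) else 0) = (n:ℝ)^3 := by
            rw [Fintype.sum_prod_type (f := fun r : (Fin n × Fin n) × (Fin n × Fin n) =>
              if r.2.2 = r.1.1 then (1:ℝ) else 0)]
            rw [Finset.sum_congr rfl (fun p _ => inner2 p.1)]
            simp [Finset.card_univ]
            ring
          have c4 : ∑ r : (Fin n × Fin n) × (Fin n × Fin n),
              (if r.2.2 = r.1.2 then (1:ℝ) else 0) = (n:ℝ)^3 := by
            rw [Fintype.sum_prod_type (f := fun r : (Fin n × Fin n) × (Fin n × Fin n) =>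
              if r.2.2 = r.1.2 then (1:ℝ) else 0)]
            rw [Finset.sum_congr rfl (fun p _ => inner2 p.2)]
            simp [Finset.card_univ]
            ring
          rw [c1, c2, c3, c4]
          nlinarith

noncomputable def S2f (Pal : Set (Φ × Φ × Φ)) (φ : Sym2 (Fin n) → Φ) : ℝ :=
  ∑ r : Fin n × Fin n, (Ff Pal φ r.1 r.2) ^ 2

lemma aux_six (η x : ℝ) (h : 6 ≤ η * x) (hx : 0 ≤ x) : 3 * x^2 ≤ (η/2) * x^3 := by
  have h1 : 6 * x^2 ≤ (η * x) * x^2 := mul_le_mul_of_nonneg_right h (by positivity)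
  nlinarith

lemma dense_of_S2_small (Pal : Set (Φ × Φ × Φ)) (d η : ℝ) (hd0 : 0 ≤ d) (hd1 : d ≤ 1)
    (hq : ∀ a b c : Fin n, a ≠ b → a ≠ c → b ≠ c → ∀ γ : Φ, d ≤ qd Pal a b c γ)
    (hη : 0 < η) (hn : 6 ≤ η * n) (φ : Sym2 (Fin n) → Φ)
    (hS2 : S2f Pal φ ≤ (η / 2) ^ 4 * (n : ℝ) ^ 6) :
    PaletteEvDense Pal n φ d η := by
  intro A P
  -- Step A : the count as a double sum of indicators
  have hN : (({t : Fin n × Fin n × Fin n | t.1 ∈ A ∧ (t.2.1, t.2.2) ∈ P ∧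
      ∃ x y z : Fin n, x < y ∧ y < z ∧
        ({t.1, t.2.1, t.2.2} : Finset (Fin n)) = {x, y, z} ∧
        (φ s(x, y), φ s(x, z), φ s(y, z)) ∈ Pal}).ncard : ℝ)
      = ∑ a ∈ A, ∑ p ∈ P, (if Edge Pal φ a p.1 p.2 then (1:ℝ) else 0) := by
    rw [Set.ncard_eq_toFinset_card']
    have hset : ({t : Fin n × Fin n × Fin n | t.1 ∈ A ∧ (t.2.1, t.2.2) ∈ P ∧
        ∃ x y z : Fin n, x < y ∧ y < z ∧
          ({t.1, t.2.1, t.2.2} : Finset (Fin n)) = {x, y, z} ∧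
          (φ s(x, y), φ s(x, z), φ s(y, z)) ∈ Pal}).toFinset
        = univ.filter (fun t : Fin n × Fin n × Fin n =>
            t.1 ∈ A ∧ (t.2.1, t.2.2) ∈ P ∧ Edge Pal φ t.1 t.2.1 t.2.2) := by
      ext t
      simp [Set.mem_toFinset, Edge]
    rw [hset, Finset.card_filter]
    push_cast
    rw [Fintype.sum_prod_type (f := fun t : Fin n × Fin n × Fin n =>
      if t.1 ∈ A ∧ (t.2.1, t.2.2) ∈ P ∧ Edge Pal φ t.1 t.2.1 t.2.2 then (1:ℝ) else 0)]
    have step : ∀ a : Fin n, ∑ q : Fin n × Fin n,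
        (if a ∈ A ∧ (q.1, q.2) ∈ P ∧ Edge Pal φ a q.1 q.2 then (1:ℝ) else 0)
        = if a ∈ A then ∑ q ∈ P, (if Edge Pal φ a q.1 q.2 then (1:ℝ) else 0) else 0 := by
      intro a
      by_cases hA : a ∈ A
      · rw [if_pos hA]
        have : ∀ q : Fin n × Fin n,
            (if a ∈ A ∧ (q.1, q.2) ∈ P ∧ Edge Pal φ a q.1 q.2 then (1:ℝ) else 0)
            = if q ∈ P then (if Edge Pal φ a q.1 q.2 then (1:ℝ) else 0) else 0 := by
          intro q
          by_cases hP : q ∈ P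
          · simp [hA, hP, ite_and]
          · simp [hP]
        rw [Finset.sum_congr rfl (fun q _ => this q)]
        rw [Finset.sum_ite_mem, Finset.univ_inter]
      · simp [hA]
    rw [Finset.sum_congr rfl (fun a _ => step a), Finset.sum_ite_mem, Finset.univ_inter]
  rw [hN]
  -- Step B : split indicator into Gf + centred part
  have hsplit : ∀ a b c : Fin n, (if Edge Pal φ a b c then (1:ℝ) else 0)
      = Gf Pal φ a b c
        + (if a ≠ b ∧ a ≠ c ∧ b ≠ c then qd Pal a b c (φ s(b, c)) else 0) := by
    intro a b c
    by_cases h : a ≠ b ∧ a ≠ c ∧ b ≠ c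
    · rw [Gf, if_pos h, if_pos h]; ring
    · rw [Gf, if_neg h, if_neg h, if_neg (fun hE => h (edge_distinct hE))]; ring
  have hNsplit : ∑ a ∈ A, ∑ p ∈ P, (if Edge Pal φ a p.1 p.2 then (1:ℝ) else 0)
      = (∑ a ∈ A, ∑ p ∈ P, Gf Pal φ a p.1 p.2)
        + ∑ a ∈ A, ∑ p ∈ P,
            (if a ≠ p.1 ∧ a ≠ p.2 ∧ p.1 ≠ p.2 then qd Pal a p.1 p.2 (φ s(p.1, p.2)) else 0) := by
    rw [← Finset.sum_add_distrib]
    apply Finset.sum_congr rfl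
    intro a _
    rw [← Finset.sum_add_distrib]
    exact Finset.sum_congr rfl fun p _ => hsplit a p.1 p.2
  rw [hNsplit]
  -- Step D1 : the q part is at least d(|A||P| - 3 n²)
  have hq_lb : (d * A.card * P.card) - 3 * (n:ℝ)^2 ≤
      ∑ a ∈ A, ∑ p ∈ P,
        (if a ≠ p.1 ∧ a ≠ p.2 ∧ p.1 ≠ p.2 then qd Pal a p.1 p.2 (φ s(p.1, p.2)) else 0) := by
    have pt : ∀ (a : Fin n) (p : Fin n × Fin n),
        d - d * ((if a = p.1 then (1:ℝ) else 0) + (if a = p.2 then 1 else 0)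
          + (if p.1 = p.2 then 1 else 0))
        ≤ (if a ≠ p.1 ∧ a ≠ p.2 ∧ p.1 ≠ p.2 then qd Pal a p.1 p.2 (φ s(p.1, p.2)) else 0) := by
      intro a p
      have n1 : (0:ℝ) ≤ if a = p.1 then 1 else 0 := by split <;> norm_num
      have n2 : (0:ℝ) ≤ if a = p.2 then 1 else 0 := by split <;> norm_num
      have n3 : (0:ℝ) ≤ if p.1 = p.2 then 1 else 0 := by split <;> norm_num
      by_cases h : a ≠ p.1 ∧ a ≠ p.2 ∧ p.1 ≠ p.2
      · rw [if_pos h]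
        have hqq := hq a p.1 p.2 h.1 h.2.1 h.2.2 (φ s(p.1, p.2))
        nlinarith
      · rw [if_neg h]
        have h' : a = p.1 ∨ a = p.2 ∨ p.1 = p.2 := by tauto
        have hone : (1:ℝ) ≤ (if a = p.1 then (1:ℝ) else 0) + (if a = p.2 then 1 else 0)
            + (if p.1 = p.2 then 1 else 0) := by
          rcases h' with h | h | h <;> rw [if_pos h] <;> linarith
        nlinarith
    have hsum1 : ∑ a ∈ A, ∑ p ∈ P,
        (d - d * ((if a = p.1 then (1:ℝ) else 0) + (if a = p.2 then 1 else 0)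
          + (if p.1 = p.2 then 1 else 0)))
        ≤ ∑ a ∈ A, ∑ p ∈ P,
          (if a ≠ p.1 ∧ a ≠ p.2 ∧ p.1 ≠ p.2 then qd Pal a p.1 p.2 (φ s(p.1, p.2)) else 0) :=
      Finset.sum_le_sum fun a _ => Finset.sum_le_sum fun p _ => pt a p
    refine le_trans ?_ hsum1
    have expand : ∑ a ∈ A, ∑ p ∈ P,
        (d - d * ((if a = p.1 then (1:ℝ) else 0) + (if a = p.2 then 1 else 0)
          + (if p.1 = p.2 then 1 else 0)))
        = d * A.card * P.card
          - d * ∑ a ∈ A, ∑ p ∈ P, ((if a = p.1 then (1:ℝ) else 0)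
              + (if a = p.2 then 1 else 0) + (if p.1 = p.2 then 1 else 0)) := by
      have inner : ∀ a : Fin n, ∑ p ∈ P,
          (d - d * ((if a = p.1 then (1:ℝ) else 0) + (if a = p.2 then 1 else 0)
            + (if p.1 = p.2 then 1 else 0)))
          = (P.card : ℝ) * d - d * ∑ p ∈ P, ((if a = p.1 then (1:ℝ) else 0)
            + (if a = p.2 then 1 else 0) + (if p.1 = p.2 then 1 else 0)) := by
        intro a
        rw [Finset.sum_sub_distrib, Finset.sum_const, ← Finset.mul_sum, nsmul_eq_mul]
      rw [Finset.sum_congr rfl (fun a _ => inner a), Finset.sum_sub_distrib,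
        Finset.sum_const, ← Finset.mul_sum, nsmul_eq_mul]
      ring
    rw [expand]
    have hcnt : ∑ a ∈ A, ∑ p ∈ P, ((if a = p.1 then (1:ℝ) else 0)
        + (if a = p.2 then 1 else 0) + (if p.1 = p.2 then 1 else 0)) ≤ 3 * (n:ℝ)^2 := by
      have hnn : ∀ (a : Fin n) (p : Fin n × Fin n), (0:ℝ) ≤ (if a = p.1 then (1:ℝ) else 0)
          + (if a = p.2 then 1 else 0) + (if p.1 = p.2 then 1 else 0) := by
        intro a p
        have n1 : (0:ℝ) ≤ if a = p.1 then 1 else 0 := by split <;> norm_num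
        have n2 : (0:ℝ) ≤ if a = p.2 then 1 else 0 := by split <;> norm_num
        have n3 : (0:ℝ) ≤ if p.1 = p.2 then 1 else 0 := by split <;> norm_num
        linarith
      have ext1 : ∑ a ∈ A, ∑ p ∈ P, ((if a = p.1 then (1:ℝ) else 0)
          + (if a = p.2 then 1 else 0) + (if p.1 = p.2 then 1 else 0))
          ≤ ∑ a : Fin n, ∑ p : Fin n × Fin n, ((if a = p.1 then (1:ℝ) else 0)
          + (if a = p.2 then 1 else 0) + (if p.1 = p.2 then 1 else 0)) := by
        apply le_trans (Finset.sum_le_sum (fun a (_ : a ∈ A) =>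
          Finset.sum_le_sum_of_subset_of_nonneg (Finset.subset_univ P)
            (fun p _ _ => hnn a p)))
        apply Finset.sum_le_sum_of_subset_of_nonneg (Finset.subset_univ A)
        intro a _ _
        exact Finset.sum_nonneg fun p _ => hnn a p
      refine ext1.trans ?_
      have c1 : ∑ a : Fin n, ∑ p : Fin n × Fin n, (if a = p.1 then (1:ℝ) else 0)
          = (n:ℝ)^2 := by
        have inner : ∀ a : Fin n, ∑ p : Fin n × Fin n, (if a = p.1 then (1:ℝ) else 0)
            = (n:ℝ) := by
          intro a
          rw [Fintype.sum_prod_type (f := fun p : Fin n × Fin n =>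
            if a = p.1 then (1:ℝ) else 0)]
          simp [Finset.sum_ite_eq, Finset.card_univ, apply_ite Finset.card,
            apply_ite (Nat.cast : ℕ → ℝ)]
        rw [Finset.sum_congr rfl (fun a _ => inner a)]
        simp [Finset.card_univ]
        ring
      have c2 : ∑ a : Fin n, ∑ p : Fin n × Fin n, (if a = p.2 then (1:ℝ) else 0)
          = (n:ℝ)^2 := by
        have inner : ∀ a : Fin n, ∑ p : Fin n × Fin n, (if a = p.2 then (1:ℝ) else 0)
            = (n:ℝ) := by
          intro a
          rw [Fintype.sum_prod_type (f := fun p : Fin n × Fin n =>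
            if a = p.2 then (1:ℝ) else 0)]
          simp [Finset.sum_ite_eq, Finset.card_univ, apply_ite Finset.card,
            apply_ite (Nat.cast : ℕ → ℝ)]
        rw [Finset.sum_congr rfl (fun a _ => inner a)]
        simp [Finset.card_univ]
        ring
      have c3 : ∑ a : Fin n, ∑ p : Fin n × Fin n, (if p.1 = p.2 then (1:ℝ) else 0)
          = (n:ℝ)^2 := by
        have inner : ∑ p : Fin n × Fin n, (if p.1 = p.2 then (1:ℝ) else 0) = (n:ℝ) := by
          rw [Fintype.sum_prod_type (f := fun p : Fin n × Fin n =>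
            if p.1 = p.2 then (1:ℝ) else 0)]
          simp [Finset.sum_ite_eq, Finset.card_univ, apply_ite Finset.card,
            apply_ite (Nat.cast : ℕ → ℝ)]
        rw [Finset.sum_congr rfl (fun a (_ : a ∈ univ) => inner)]
        simp [Finset.card_univ]
        ring
      rw [Finset.sum_congr rfl (fun a (_ : a ∈ univ) => Finset.sum_add_distrib),
        Finset.sum_add_distrib]
      rw [Finset.sum_congr rfl (fun a (_ : a ∈ univ) => Finset.sum_add_distrib),
        Finset.sum_add_distrib]
      rw [c1, c2, c3]
      linarith
    have hAP : (0:ℝ) ≤ (A.card : ℝ) * P.card := by positivity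
    nlinarith [hcnt, hd0, hd1]
  -- Step D2 : the Gf part is at least -(η/2) n³
  have hG_lb : -((η / 2) * (n:ℝ)^3) ≤ ∑ a ∈ A, ∑ p ∈ P, Gf Pal φ a p.1 p.2 := by
    set T : ℝ := ∑ a ∈ A, ∑ p ∈ P, Gf Pal φ a p.1 p.2 with hT
    have hTc : T = ∑ p ∈ P, ∑ a ∈ A, Gf Pal φ a p.1 p.2 := Finset.sum_comm
    have h1 : T ^ 2 ≤ (P.card : ℝ) * ∑ p ∈ P, (∑ a ∈ A, Gf Pal φ a p.1 p.2) ^ 2 := by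
      have := Finset.sum_mul_sq_le_sq_mul_sq P (fun _ => (1:ℝ))
        (fun p => ∑ a ∈ A, Gf Pal φ a p.1 p.2)
      simpa [hTc, Finset.sum_const, nsmul_eq_mul] using this
    have h2 : ∑ p ∈ P, (∑ a ∈ A, Gf Pal φ a p.1 p.2) ^ 2
        ≤ ∑ p : Fin n × Fin n, (∑ a ∈ A, Gf Pal φ a p.1 p.2) ^ 2 :=
      Finset.sum_le_sum_of_subset_of_nonneg (Finset.subset_univ P)
        (fun p _ _ => sq_nonneg _)
    have h3 : ∑ p : Fin n × Fin n, (∑ a ∈ A, Gf Pal φ a p.1 p.2) ^ 2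
        = ∑ a ∈ A, ∑ a' ∈ A, Ff Pal φ a a' := by
      have e1 : ∀ p : Fin n × Fin n, (∑ a ∈ A, Gf Pal φ a p.1 p.2) ^ 2
          = ∑ a ∈ A, ∑ a' ∈ A, Gf Pal φ a p.1 p.2 * Gf Pal φ a' p.1 p.2 := by
        intro p
        rw [sq, Finset.sum_mul_sum]
      rw [Finset.sum_congr rfl (fun p _ => e1 p)]
      rw [Finset.sum_comm]
      apply Finset.sum_congr rfl
      intro a _
      rw [Finset.sum_comm]
      exact Finset.sum_congr rfl fun a' _ => rfl
    have habs : ∀ a a' : Fin n, Ff Pal φ a a' ≤ |Ff Pal φ a a'| := fun a a' => le_abs_self _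
    have h4 : ∑ a ∈ A, ∑ a' ∈ A, Ff Pal φ a a'
        ≤ ∑ r : Fin n × Fin n, |Ff Pal φ r.1 r.2| := by
      calc ∑ a ∈ A, ∑ a' ∈ A, Ff Pal φ a a' ≤ ∑ a ∈ A, ∑ a' ∈ A, |Ff Pal φ a a'| :=
            Finset.sum_le_sum fun a _ => Finset.sum_le_sum fun a' _ => habs a a'
      _ ≤ ∑ a : Fin n, ∑ a' : Fin n, |Ff Pal φ a a'| := by
          apply le_trans (Finset.sum_le_sum (fun a (_ : a ∈ A) =>
            Finset.sum_le_sum_of_subset_of_nonneg (Finset.subset_univ A)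
              (fun a' _ _ => abs_nonneg _)))
          exact Finset.sum_le_sum_of_subset_of_nonneg (Finset.subset_univ A)
            (fun a _ _ => Finset.sum_nonneg fun a' _ => abs_nonneg _)
      _ = ∑ r : Fin n × Fin n, |Ff Pal φ r.1 r.2| :=
          (Fintype.sum_prod_type (f := fun r : Fin n × Fin n => |Ff Pal φ r.1 r.2|)).symm
    set S1 : ℝ := ∑ r : Fin n × Fin n, |Ff Pal φ r.1 r.2| with hS1
    have hS1nn : 0 ≤ S1 := Finset.sum_nonneg fun r _ => abs_nonneg _
    have h5 : S1 ^ 2 ≤ (n:ℝ)^2 * S2f Pal φ := by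
      have := Finset.sum_mul_sq_le_sq_mul_sq (univ : Finset (Fin n × Fin n))
        (fun _ => (1:ℝ)) (fun r => |Ff Pal φ r.1 r.2|)
      have hcard : ((univ : Finset (Fin n × Fin n)).card : ℝ) = (n:ℝ)^2 := by
        simp [Finset.card_univ]
        ring
      have hsq : ∀ r : Fin n × Fin n, |Ff Pal φ r.1 r.2| ^ 2 = (Ff Pal φ r.1 r.2) ^ 2 :=
        fun r => sq_abs _
      simp only [one_mul, one_pow, mul_one, Finset.sum_const, nsmul_eq_mul, hsq] at this
      calc S1 ^ 2 ≤ ((univ : Finset (Fin n × Fin n)).card : ℝ)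
            * ∑ r : Fin n × Fin n, (Ff Pal φ r.1 r.2) ^ 2 := this
      _ = (n:ℝ)^2 * S2f Pal φ := by rw [hcard]; rfl
    -- combine
    have hPcard : (P.card : ℝ) ≤ (n:ℝ)^2 := by
      have := Finset.card_le_univ P
      have hc : ((univ : Finset (Fin n × Fin n)).card : ℝ) = (n:ℝ)^2 := by
        simp [Finset.card_univ]
        ring
      calc (P.card : ℝ) ≤ ((univ : Finset (Fin n × Fin n)).card : ℝ) := by exact_mod_cast this
      _ = (n:ℝ)^2 := hc
    have hQnn : (0:ℝ) ≤ ∑ p ∈ P, (∑ a ∈ A, Gf Pal φ a p.1 p.2) ^ 2 :=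
      Finset.sum_nonneg fun p _ => sq_nonneg _
    have hT2 : T ^ 2 ≤ (n:ℝ)^2 * S1 := by
      calc T ^ 2 ≤ (P.card : ℝ) * ∑ p ∈ P, (∑ a ∈ A, Gf Pal φ a p.1 p.2) ^ 2 := h1
      _ ≤ (n:ℝ)^2 * ∑ p ∈ P, (∑ a ∈ A, Gf Pal φ a p.1 p.2) ^ 2 :=
          mul_le_mul_of_nonneg_right hPcard hQnn
      _ ≤ (n:ℝ)^2 * ∑ p : Fin n × Fin n, (∑ a ∈ A, Gf Pal φ a p.1 p.2) ^ 2 :=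
          mul_le_mul_of_nonneg_left h2 (by positivity)
      _ = (n:ℝ)^2 * (∑ a ∈ A, ∑ a' ∈ A, Ff Pal φ a a') := by rw [h3]
      _ ≤ (n:ℝ)^2 * S1 := mul_le_mul_of_nonneg_left h4 (by positivity)
    have hT4 : T ^ 4 ≤ ((η / 2) * (n:ℝ)^3) ^ 4 := by
      have e1 : T ^ 4 = (T ^ 2) ^ 2 := by ring
      have e2 : (T ^ 2) ^ 2 ≤ ((n:ℝ)^2 * S1) ^ 2 := by
        apply pow_le_pow_left₀ (sq_nonneg T) hT2
      have e3 : ((n:ℝ)^2 * S1) ^ 2 = (n:ℝ)^4 * S1 ^ 2 := by ring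
      have e4 : (n:ℝ)^4 * S1 ^ 2 ≤ (n:ℝ)^4 * ((n:ℝ)^2 * S2f Pal φ) :=
        mul_le_mul_of_nonneg_left h5 (by positivity)
      have e5 : (n:ℝ)^4 * ((n:ℝ)^2 * S2f Pal φ)
          ≤ (n:ℝ)^4 * ((n:ℝ)^2 * ((η / 2) ^ 4 * (n : ℝ) ^ 6)) := by
        apply mul_le_mul_of_nonneg_left _ (by positivity)
        exact mul_le_mul_of_nonneg_left hS2 (by positivity)
      have e6 : (n:ℝ)^4 * ((n:ℝ)^2 * ((η / 2) ^ 4 * (n : ℝ) ^ 6))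
          = ((η / 2) * (n:ℝ)^3) ^ 4 := by ring
      linarith
    have hB : (0:ℝ) ≤ (η / 2) * (n:ℝ)^3 := by positivity
    have habsT : |T| ≤ (η / 2) * (n:ℝ)^3 := by
      have e7 : |T| ^ 4 ≤ ((η / 2) * (n:ℝ)^3) ^ 4 := by
        have h40 : (0:ℝ) ≤ T ^ 4 := by
          have h41 : T ^ 4 = (T ^ 2) ^ 2 := by ring
          rw [h41]; exact sq_nonneg _
        have h42 : |T| ^ 4 = T ^ 4 := by
          rw [← abs_pow, abs_of_nonneg h40]
        rw [h42]; exact hT4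
      exact le_of_pow_le_pow_left₀ (by norm_num) hB e7
    have := (abs_le.mp habsT).1
    linarith
  have h3 : 3 * (n:ℝ)^2 ≤ (η / 2) * (n:ℝ)^3 := aux_six η (n:ℝ) hn (Nat.cast_nonneg n)
  set X : ℝ := ∑ a ∈ A, ∑ p ∈ P, Gf Pal φ a p.1 p.2 with hX
  set Y : ℝ := ∑ a ∈ A, ∑ p ∈ P,
    (if a ≠ p.1 ∧ a ≠ p.2 ∧ p.1 ≠ p.2 then qd Pal a p.1 p.2 (φ s(p.1, p.2)) else 0) with hY
  clear_value X Y
  linarith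

lemma S2f_nonneg (Pal : Set (Φ × Φ × Φ)) (φ : Sym2 (Fin n) → Φ) : 0 ≤ S2f Pal φ :=
  Finset.sum_nonneg fun r _ => sq_nonneg _

lemma sum_S2f_le (Pal : Set (Φ × Φ × Φ)) :
    ∑ φ : Sym2 (Fin n) → Φ, S2f Pal φ
      ≤ 5 * (n : ℝ) ^ 5 * (Fintype.card (Sym2 (Fin n) → Φ) : ℝ) := by
  set K : ℝ := (Fintype.card (Sym2 (Fin n) → Φ) : ℝ) with hK
  have hK0 : 0 ≤ K := by positivity
  rw [show (∑ φ : Sym2 (Fin n) → Φ, S2f Pal φ)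
      = ∑ r : Fin n × Fin n, ∑ φ : Sym2 (Fin n) → Φ, (Ff Pal φ r.1 r.2) ^ 2 from
    Finset.sum_comm]
  have point : ∀ r : Fin n × Fin n, ∑ φ : Sym2 (Fin n) → Φ, (Ff Pal φ r.1 r.2) ^ 2
      ≤ 4 * (n:ℝ)^3 * K + (if r.1 = r.2 then (n:ℝ)^4 * K else 0) := by
    intro r
    by_cases h : r.1 = r.2
    · rw [if_pos h]
      have hb : ∀ φ : Sym2 (Fin n) → Φ, (Ff Pal φ r.1 r.2) ^ 2 ≤ (n:ℝ)^4 := by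
        intro φ
        have h1 := Ff_abs_le Pal φ r.1 r.2
        have h2 : (Ff Pal φ r.1 r.2) ^ 2 = |Ff Pal φ r.1 r.2| ^ 2 := (sq_abs _).symm
        rw [h2]
        calc |Ff Pal φ r.1 r.2| ^ 2 ≤ ((n:ℝ)^2)^2 :=
              pow_le_pow_left₀ (abs_nonneg _) h1 2
        _ = (n:ℝ)^4 := by ring
      calc ∑ φ : Sym2 (Fin n) → Φ, (Ff Pal φ r.1 r.2) ^ 2
          ≤ ∑ _φ : Sym2 (Fin n) → Φ, (n:ℝ)^4 := Finset.sum_le_sum fun φ _ => hb φ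
      _ = (n:ℝ)^4 * K := by simp [Finset.sum_const, nsmul_eq_mul, hK]; ring
      _ ≤ 4 * (n:ℝ)^3 * K + (n:ℝ)^4 * K := by
          have h4 : (0:ℝ) ≤ 4 * (n:ℝ)^3 * K := by positivity
          linarith
    · rw [if_neg h]
      rw [add_zero]
      exact sum_sq_Ff_le Pal h
  calc ∑ r : Fin n × Fin n, ∑ φ : Sym2 (Fin n) → Φ, (Ff Pal φ r.1 r.2) ^ 2
      ≤ ∑ r : Fin n × Fin n,
        (4 * (n:ℝ)^3 * K + (if r.1 = r.2 then (n:ℝ)^4 * K else 0)) :=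
      Finset.sum_le_sum fun r _ => point r
  _ = (n:ℝ)^2 * (4 * (n:ℝ)^3 * K)
      + ∑ r : Fin n × Fin n, (if r.1 = r.2 then (n:ℝ)^4 * K else 0) := by
      rw [Finset.sum_add_distrib, Finset.sum_const, nsmul_eq_mul]
      have hc : ((#(univ : Finset (Fin n × Fin n)) : ℕ) : ℝ) = (n:ℝ)^2 := by
        push_cast [Finset.card_univ, Fintype.card_prod, Fintype.card_fin]
        ring
      rw [hc]
  _ = (n:ℝ)^2 * (4 * (n:ℝ)^3 * K) + (n:ℝ) * ((n:ℝ)^4 * K) := by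
      have : ∑ r : Fin n × Fin n, (if r.1 = r.2 then (n:ℝ)^4 * K else 0)
          = (n:ℝ) * ((n:ℝ)^4 * K) := by
        rw [Fintype.sum_prod_type (f := fun r : Fin n × Fin n =>
          if r.1 = r.2 then (n:ℝ)^4 * K else 0)]
        simp [Finset.sum_ite_eq, Finset.card_univ]
      rw [this]
  _ ≤ 5 * (n : ℝ) ^ 5 * K := by nlinarith [hK0, pow_nonneg (Nat.cast_nonneg n : (0:ℝ) ≤ n) 5]

lemma markov_S2f (Pal : Set (Φ × Φ × Φ)) (t : ℝ) :
    ((univ.filter (fun φ : Sym2 (Fin n) → Φ => ¬ S2f Pal φ ≤ t)).card : ℝ) * t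
      ≤ ∑ φ : Sym2 (Fin n) → Φ, S2f Pal φ := by
  set B := univ.filter (fun φ : Sym2 (Fin n) → Φ => ¬ S2f Pal φ ≤ t) with hB
  have h1 : ∀ φ ∈ B, t ≤ S2f Pal φ := by
    intro φ hφ
    rw [hB, Finset.mem_filter] at hφ
    exact le_of_lt (lt_of_not_ge hφ.2)
  calc ((B.card : ℝ)) * t = ∑ _φ ∈ B, t := by
        rw [Finset.sum_const, nsmul_eq_mul]
  _ ≤ ∑ φ ∈ B, S2f Pal φ := Finset.sum_le_sum h1
  _ ≤ ∑ φ : Sym2 (Fin n) → Φ, S2f Pal φ :=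
      Finset.sum_le_sum_of_subset_of_nonneg (Finset.subset_univ B)
        (fun φ _ _ => S2f_nonneg Pal φ)


end PaletteAux

/-- If the palette `Pal ⊆ Φ³` is `(d, ·∙)`-dense, then for every `η > 0` the probability
(under a uniformly random colouring `φ` of the pairs of `Fin n`) that `H^Pal_φ` fails to
be `(d, η, ·∙)`-dense tends to `0` as `n → ∞`. -/
theorem random_palette_hypergraph_evDense {Φ : Type} [Fintype Φ] [Nonempty Φ]
    (Pal : Set (Φ × Φ × Φ)) (d : ℝ)
    (h1 : ∀ α : Φ, d * ((Fintype.card Φ : ℝ)) ^ 2 ≤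
      (({bc : Φ × Φ | (α, bc.1, bc.2) ∈ Pal}).ncard : ℝ))
    (h2 : ∀ β : Φ, d * ((Fintype.card Φ : ℝ)) ^ 2 ≤
      (({ac : Φ × Φ | (ac.1, β, ac.2) ∈ Pal}).ncard : ℝ))
    (h3 : ∀ γ : Φ, d * ((Fintype.card Φ : ℝ)) ^ 2 ≤
      (({ab : Φ × Φ | (ab.1, ab.2, γ) ∈ Pal}).ncard : ℝ))
    (η : ℝ) (hη : 0 < η) :
    Filter.Tendsto
      (fun n =>
        ((((Finset.univ : Finset (Sym2 (Fin n) → Φ)).filter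
            (fun φ => ¬ PaletteEvDense Pal n φ d η)).card : ℝ) /
          ((Fintype.card (Sym2 (Fin n) → Φ) : ℝ))))
      Filter.atTop (nhds 0) := by
  by_cases hd : d ≤ 0
  · -- trivial case : every colouring works
    have hall : ∀ (n : ℕ) (φ : Sym2 (Fin n) → Φ), PaletteEvDense Pal n φ d η := by
      intro n φ A P
      have hle : d * A.card * P.card ≤ 0 := by
        have : (0:ℝ) ≤ (A.card : ℝ) * P.card := by positivity
        nlinarith
      have hn3 : (0:ℝ) ≤ η * (n:ℝ)^3 := by positivity
      have hnc : (0:ℝ) ≤ (({t : Fin n × Fin n × Fin n | t.1 ∈ A ∧ (t.2.1, t.2.2) ∈ P ∧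
          ∃ x y z : Fin n, x < y ∧ y < z ∧
            ({t.1, t.2.1, t.2.2} : Finset (Fin n)) = {x, y, z} ∧
            (φ s(x, y), φ s(x, z), φ s(y, z)) ∈ Pal}).ncard : ℝ) := by positivity
      linarith
    have : ∀ n : ℕ, ((((Finset.univ : Finset (Sym2 (Fin n) → Φ)).filter
            (fun φ => ¬ PaletteEvDense Pal n φ d η)).card : ℝ) /
          ((Fintype.card (Sym2 (Fin n) → Φ) : ℝ))) = 0 := by
      intro n
      have : (Finset.univ : Finset (Sym2 (Fin n) → Φ)).filter
          (fun φ => ¬ PaletteEvDense Pal n φ d η) = ∅ := by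
        apply Finset.filter_eq_empty_iff.mpr
        intro φ _
        simp only [not_not]
        exact hall n φ
      rw [this]
      simp
    rw [show (fun n =>
        ((((Finset.univ : Finset (Sym2 (Fin n) → Φ)).filter
            (fun φ => ¬ PaletteEvDense Pal n φ d η)).card : ℝ) /
          ((Fintype.card (Sym2 (Fin n) → Φ) : ℝ)))) = (fun _ => (0:ℝ)) from funext this]
    exact tendsto_const_nhds
  · push_neg at hd
    have hqd : ∀ {m : ℕ} (a b c : Fin m), a ≠ b → a ≠ c → b ≠ c → ∀ γ : Φ,
        d ≤ qd Pal a b c γ := by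
      intro m a b c hab hac hbc γ
      rw [qd, le_div_iff₀ cardΦ_sq_pos]
      exact d_le_qcard Pal d h1 h2 h3 hab hac hbc γ
    -- d ≤ 1
    have hd1 : d ≤ 1 := by
      have hα := h1 (Classical.arbitrary Φ)
      have hcard : (({bc : Φ × Φ | ((Classical.arbitrary Φ), bc.1, bc.2) ∈ Pal}).ncard : ℝ)
          ≤ ((Fintype.card Φ : ℝ)) ^ 2 := by
        have h2 : ({bc : Φ × Φ | ((Classical.arbitrary Φ), bc.1, bc.2) ∈ Pal}).ncard
            ≤ Nat.card (Φ × Φ) := by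
          rw [← Set.ncard_univ]
          exact Set.ncard_le_ncard (Set.subset_univ _) Set.finite_univ
        calc (({bc : Φ × Φ | ((Classical.arbitrary Φ), bc.1, bc.2) ∈ Pal}).ncard : ℝ)
            ≤ (Nat.card (Φ × Φ) : ℝ) := by exact_mod_cast h2
        _ = ((Fintype.card Φ : ℝ)) ^ 2 := by
            rw [Nat.card_eq_fintype_card]
            push_cast [Fintype.card_prod]
            ring
      have hc2 : (0:ℝ) < ((Fintype.card Φ : ℝ)) ^ 2 := by
        have := Fintype.card_pos (α := Φ)
        positivity
      nlinarith
    -- main case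
    set C : ℝ := 80 / η ^ 4 with hC
    have hC0 : 0 < C := by rw [hC]; positivity
    apply tendsto_of_tendsto_of_tendsto_of_le_of_le'
      (tendsto_const_nhds (x := (0:ℝ))) (tendsto_const_div_atTop_nhds_zero_nat C)
    · refine Filter.Eventually.of_forall fun n => ?_
      positivity
    · have hN : ∃ N : ℕ, 1 ≤ N ∧ 6 ≤ η * N := by
        refine ⟨max 1 ⌈6 / η⌉₊, le_max_left _ _, ?_⟩
        have h6 : 6 / η ≤ (⌈6 / η⌉₊ : ℝ) := Nat.le_ceil _
        have hmax : ((⌈6 / η⌉₊ : ℕ) : ℝ) ≤ ((max 1 ⌈6 / η⌉₊ : ℕ) : ℝ) := by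
          exact_mod_cast le_max_right 1 ⌈6 / η⌉₊
        calc (6:ℝ) = η * (6 / η) := by field_simp
        _ ≤ η * ⌈6 / η⌉₊ := by
            apply mul_le_mul_of_nonneg_left h6 (le_of_lt hη)
        _ ≤ η * (max 1 ⌈6 / η⌉₊ : ℕ) := by
            apply mul_le_mul_of_nonneg_left hmax (le_of_lt hη)
      obtain ⟨N, hN1, hN6⟩ := hN
      rw [Filter.eventually_atTop]
      refine ⟨N, fun n hn => ?_⟩
      have hn6 : 6 ≤ η * n := by
        refine hN6.trans ?_
        apply mul_le_mul_of_nonneg_left _ (le_of_lt hη)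
        exact_mod_cast hn
      have hn1 : 1 ≤ n := le_trans hN1 hn
      have hn0 : (0:ℝ) < (n:ℝ) := by exact_mod_cast hn1
      set K : ℝ := (Fintype.card (Sym2 (Fin n) → Φ) : ℝ) with hK
      have hK0 : (0:ℝ) < K := by
        rw [hK]
        exact_mod_cast Fintype.card_pos
      set t : ℝ := (η / 2) ^ 4 * (n:ℝ) ^ 6 with ht
      have ht0 : 0 < t := by rw [ht]; positivity
      set B := univ.filter (fun φ : Sym2 (Fin n) → Φ => ¬ S2f Pal φ ≤ t) with hB
      have hsub : (Finset.univ : Finset (Sym2 (Fin n) → Φ)).filter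
          (fun φ => ¬ PaletteEvDense Pal n φ d η) ⊆ B := by
        intro φ hφ
        rw [Finset.mem_filter] at hφ
        rw [hB, Finset.mem_filter]
        refine ⟨Finset.mem_univ _, fun hS2 => ?_⟩
        exact hφ.2 (dense_of_S2_small Pal d η (le_of_lt hd) hd1 (fun a b c hab hac hbc γ => hqd a b c hab hac hbc γ) hη hn6 φ hS2)
      have hcard1 : (((Finset.univ : Finset (Sym2 (Fin n) → Φ)).filter
          (fun φ => ¬ PaletteEvDense Pal n φ d η)).card : ℝ) ≤ (B.card : ℝ) := by
        exact_mod_cast Finset.card_le_card hsub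
      have hmar : (B.card : ℝ) * t ≤ 5 * (n : ℝ) ^ 5 * K :=
        le_trans (markov_S2f Pal t) (sum_S2f_le Pal)
      have heq : ((C / (n:ℝ)) * K) * t = 5 * (n:ℝ)^5 * K := by
        rw [hC, ht]
        have hη' : η ≠ 0 := ne_of_gt hη
        have hn' : (n:ℝ) ≠ 0 := ne_of_gt hn0
        field_simp
        ring
      have hkey : (B.card : ℝ) ≤ (C / (n:ℝ)) * K := by
        refine le_of_mul_le_mul_right ?_ ht0
        rw [heq]
        exact hmar
      rw [div_le_iff₀ hK0]
      exact le_trans hcard1 hkey
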